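/- Let v(t) = ∫_{−2w}^{2w} e^{itλ} ρ_sc(λ) dλ. Then the convolution (v∗v)(t) := ∫₀ᵗ v(t−s)v(s) ds equals −(i/w²) ∫_{−2w}^{2w} e^{iμt} μ ρ_sc(μ) dμ. -/

import Mathlib

open MeasureTheory intervalIntegral

set_option maxHeartbeats 1000000

/-- The semicircle density with parameter `w`. -/
noncomputable def rhoSC (w x : ℝ) : ℝ :=
  (2 * Real.pi * w ^ 2)⁻¹ * Real.sqrt (max 0 (4 * w ^ 2 - x ^ 2))

/-- `v(t) = ∫ e^{itλ} ρ_sc(λ) dλ`, the Fourier transform of the semicircle density. -/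
noncomputable def vSC (w t : ℝ) : ℂ :=
  ∫ x in (-(2 * w))..(2 * w), Complex.exp (Complex.I * t * x) * (rhoSC w x : ℂ)

open Real

lemma catalan_rec (k : ℕ) : (k + 2) * catalan (k + 1) = 2 * (2 * k + 1) * catalan k := by
  have h1 : (k + 1 + 1) * catalan (k + 1) = Nat.centralBinom (k + 1) :=
    succ_mul_catalan_eq_centralBinom (k+1)
  have h2 : (k + 1) * Nat.centralBinom (k + 1) = 2 * (2 * k + 1) * Nat.centralBinom k :=
    Nat.succ_mul_centralBinom_succ k
  have h3 : (k + 1) * catalan k = Nat.centralBinom k := succ_mul_catalan_eq_centralBinom k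
  have h4 : Nat.centralBinom (k+1) = 2 * (2*k+1) * catalan k := by
    apply Nat.eq_of_mul_eq_mul_left (by omega : 0 < k + 1)
    rw [h2, ← h3]; ring
  rw [show k + 2 = k + 1 + 1 from rfl, h1, h4]


lemma beta_nat (a : ℕ) : ∀ (b : ℕ) (t : ℝ),
    (∫ s in (0:ℝ)..t, (t - s) ^ a * s ^ b)
      = t ^ (a + b + 1) * (a.factorial * b.factorial) / (a + b + 1).factorial := by
  induction a with
  | zero =>
    intro b t
    simp only [pow_zero, one_mul, integral_pow, Nat.zero_add, Nat.factorial_one, Nat.factorial]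
    push_cast
    field_simp
    ring
  | succ a ih =>
    intro b t
    have key : (b + 1 : ℝ) * ∫ s in (0:ℝ)..t, (t - s) ^ (a+1) * s ^ b
        = (a + 1 : ℝ) * ∫ s in (0:ℝ)..t, (t - s) ^ a * s ^ (b+1) := by
      have hderiv : ∀ s ∈ Set.uIcc (0:ℝ) t, HasDerivAt (fun s : ℝ => (t - s) ^ (a+1) * s ^ (b+1))
          ((b+1 : ℝ) * ((t - s)^(a+1) * s^b) - (a+1 : ℝ) * ((t - s)^a * s^(b+1))) s := by
        intro s _
        have h1 : HasDerivAt (fun s : ℝ => (t - s) ^ (a+1)) (((a+1 : ℕ) : ℝ) * (t - s)^a * (-1)) s :=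
          (((hasDerivAt_id s).const_sub t).pow (a+1))
        have h2 : HasDerivAt (fun s : ℝ => s ^ (b+1)) (((b+1 : ℕ) : ℝ) * s^b) s := by
          simpa using (hasDerivAt_pow (b+1) s)
        have := h1.mul h2
        convert this using 1
        all_goals try rfl
        push_cast
        ring
      have hint : IntervalIntegrable (fun s : ℝ => (b+1 : ℝ) * ((t - s)^(a+1) * s^b) - (a+1 : ℝ) * ((t - s)^a * s^(b+1))) volume 0 t :=
        (Continuous.sub (by continuity) (by continuity)).intervalIntegrable _ _
      have heq := intervalIntegral.integral_eq_sub_of_hasDerivAt hderiv hint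
      rw [intervalIntegral.integral_sub ((by continuity : Continuous fun s:ℝ => (b+1 : ℝ) * ((t - s)^(a+1) * s^b)).intervalIntegrable _ _)
        ((by continuity : Continuous fun s:ℝ => (a+1 : ℝ) * ((t - s)^a * s^(b+1))).intervalIntegrable _ _),
        intervalIntegral.integral_const_mul, intervalIntegral.integral_const_mul] at heq
      have hz : (t - t) ^ (a+1) * t^(b+1) - (t - 0)^(a+1) * (0:ℝ)^(b+1) = 0 := by simp
      rw [hz] at heq
      linarith
    have ihb := ih (b+1) t
    have hb1 : (b + 1 : ℝ) ≠ 0 := by positivity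
    have ha1 : (a + 1 : ℝ) ≠ 0 := by positivity
    have hstep : (∫ s in (0:ℝ)..t, (t - s) ^ (a+1) * s ^ b)
        = (a + 1 : ℝ) / (b+1) * ∫ s in (0:ℝ)..t, (t - s) ^ a * s ^ (b+1) := by
      rw [div_mul_eq_mul_div, eq_div_iff hb1]
      linarith [key]
    rw [hstep, ihb]
    have harr : a + (b + 1) + 1 = a + 1 + b + 1 := by ring
    rw [harr, Nat.factorial_succ a, Nat.factorial_succ b]
    have hf : ((a+1+b+1).factorial : ℝ) ≠ 0 := by positivity
    field_simp
    push_cast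
    ring

lemma sqrt_max0 (x : ℝ) : Real.sqrt (max 0 x) = Real.sqrt x := by
  rcases le_total 0 x with h|h
  · rw [max_eq_right h]
  · rw [max_eq_left h, Real.sqrt_eq_zero_of_nonpos h, Real.sqrt_zero]

lemma rhoSC_cont (w : ℝ) : Continuous (rhoSC w) := by
  unfold rhoSC
  exact continuous_const.mul (Real.continuous_sqrt.comp (continuous_const.max (by continuity)))

noncomputable def Ms (c : ℝ) (k : ℕ) : ℝ := ∫ x in (-c)..c, x ^ k * Real.sqrt (c^2 - x^2)

lemma Ms_zero (c : ℝ) (hc : 0 < c) : Ms c 0 = Real.pi * c ^ 2 / 2 := by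
  have h := intervalIntegral.integral_comp_mul_left
    (fun y => Real.sqrt (c^2 - y^2)) (ne_of_gt hc) (a := -1) (b := 1)
  have heq : ∀ x : ℝ, Real.sqrt (c^2 - (c*x)^2) = c * Real.sqrt (1 - x^2) := by
    intro x
    rw [show c^2 - (c*x)^2 = c^2 * (1 - x^2) by ring, Real.sqrt_mul (sq_nonneg c),
      Real.sqrt_sq hc.le]
  simp only [heq] at h
  rw [intervalIntegral.integral_const_mul, integral_sqrt_one_sub_sq] at h
  have : Ms c 0 = ∫ x in (-c)..c, Real.sqrt (c^2 - x^2) := by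
    unfold Ms; congr 1; ext x; rw [pow_zero, one_mul]
  rw [this]
  rw [show c * (-1) = -c by ring, show c * (1:ℝ) = c by ring] at h
  rw [smul_eq_mul] at h
  have hcne : c ≠ 0 := ne_of_gt hc
  field_simp at h
  linarith

lemma Ms_rec (c : ℝ) (hc : 0 < c) (k : ℕ) :
    (2*(k:ℝ)+4) * Ms c (2*k+2) = (2*(k:ℝ)+1) * c^2 * Ms c (2*k) := by
  set F : ℝ → ℝ := fun x => x^(2*k+1) * (Real.sqrt (c^2 - x^2))^3 with hF
  set f : ℝ → ℝ := fun x => (2*(k:ℝ)+1) * c^2 * (x^(2*k) * Real.sqrt (c^2-x^2))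
      - (2*(k:ℝ)+4) * (x^(2*k+2) * Real.sqrt (c^2-x^2)) with hf
  have hcont : ContinuousOn F (Set.Icc (-c) c) :=
    (continuous_pow _ |>.mul ((Real.continuous_sqrt.comp (by continuity)).pow 3)).continuousOn
  have hderiv : ∀ x ∈ Set.Ioo (-c) c, HasDerivAt F (f x) x := by
    intro x hx
    have hpos : 0 < c^2 - x^2 := by nlinarith [hx.1, hx.2]
    have hS : HasDerivAt (fun x : ℝ => Real.sqrt (c^2 - x^2)) ((-2*x) / (2 * Real.sqrt (c^2-x^2))) x := by
      have hin : HasDerivAt (fun x : ℝ => c^2 - x^2) (-2*x) x := by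
        have := ((hasDerivAt_pow 2 x).const_sub (c^2))
        simpa using this
      exact hin.sqrt (ne_of_gt hpos)
    have h1 : HasDerivAt (fun x : ℝ => x^(2*k+1)) ((2*(k:ℝ)+1) * x^(2*k)) x := by
      have := hasDerivAt_pow (2*k+1) x
      simpa [Nat.cast_add, Nat.cast_mul] using this
    have h2 := (hS.pow 3)
    have hprod := h1.mul h2
    convert hprod using 1
    all_goals try rfl
    have hS2 : (Real.sqrt (c^2 - x^2))^2 = c^2 - x^2 := Real.sq_sqrt hpos.le
    have hSpos : 0 < Real.sqrt (c^2 - x^2) := Real.sqrt_pos.mpr hpos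
    set S := Real.sqrt (c^2 - x^2) with hSdef
    have hSne : S ≠ 0 := ne_of_gt hSpos
    have e1 : ((3:ℕ):ℝ) * S ^ (3-1) * (-2*x/(2*S)) = -3 * x * S := by
      push_cast
      field_simp
    rw [e1, hf]
    simp only [Pi.pow_apply]
    linear_combination (-(2*(k:ℝ)+1) * x^(2*k) * S) * hS2
  have hint : IntervalIntegrable f volume (-c) c := by
    apply Continuous.intervalIntegrable
    apply Continuous.sub
    · exact continuous_const.mul ((continuous_pow _).mul (Real.continuous_sqrt.comp (by continuity)))
    · exact continuous_const.mul ((continuous_pow _).mul (Real.continuous_sqrt.comp (by continuity)))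
  have hab : (-c) ≤ c := by linarith
  have hFTC := intervalIntegral.integral_eq_sub_of_hasDerivAt_of_le hab hcont hderiv hint
  have hFc : F c = 0 := by simp [hF]
  have hFmc : F (-c) = 0 := by
    simp only [hF]
    have : c^2 - (-c)^2 = 0 := by ring
    rw [this, Real.sqrt_zero]
    ring
  rw [hFc, hFmc, sub_zero] at hFTC
  have hsplit : (∫ x in (-c)..c, f x)
      = (2*(k:ℝ)+1) * c^2 * Ms c (2*k) - (2*(k:ℝ)+4) * Ms c (2*k+2) := by
    rw [hf]
    rw [intervalIntegral.integral_sub, intervalIntegral.integral_const_mul,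
      intervalIntegral.integral_const_mul]
    · rfl
    · exact (continuous_const.mul ((continuous_pow _).mul (Real.continuous_sqrt.comp (by continuity)))).intervalIntegrable _ _
    · exact (continuous_const.mul ((continuous_pow _).mul (Real.continuous_sqrt.comp (by continuity)))).intervalIntegrable _ _
  rw [hsplit] at hFTC
  linarith

noncomputable def mSC (w : ℝ) (k : ℕ) : ℝ := ∫ x in (-(2*w))..(2*w), x ^ k * rhoSC w x

lemma mSC_eq (w : ℝ) (k : ℕ) : mSC w k = (2 * Real.pi * w ^ 2)⁻¹ * Ms (2*w) k := by
  unfold mSC Ms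
  rw [← intervalIntegral.integral_const_mul]
  apply intervalIntegral.integral_congr
  intro x _
  unfold rhoSC
  beta_reduce
  rw [sqrt_max0, show 4*w^2 - x^2 = (2*w)^2 - x^2 by ring]
  ring

lemma Ms_odd (c : ℝ) (k : ℕ) : Ms c (2*k+1) = 0 := by
  unfold Ms
  set f : ℝ → ℝ := fun x => x ^ (2*k+1) * Real.sqrt (c^2 - x^2) with hfd
  have hodd : ∀ x, f (-x) = - f x := by
    intro x
    simp only [hfd]
    rw [show (-x)^(2*k+1) = -(x^(2*k+1)) by rw [Odd.neg_pow ⟨k, by ring⟩], show (-x)^2 = x^2 by ring]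
    ring
  have h := intervalIntegral.integral_comp_neg (a := -c) (b := c) f
  simp only [hodd, neg_neg] at h
  rw [intervalIntegral.integral_neg] at h
  linarith

lemma mSC_odd (w : ℝ) (k : ℕ) : mSC w (2*k+1) = 0 := by
  rw [mSC_eq, Ms_odd, mul_zero]

lemma mSC_even (w : ℝ) (hw : 0 < w) (k : ℕ) : mSC w (2*k) = catalan k * w^(2*k) := by
  have hc : (0:ℝ) < 2*w := by linarith
  induction k with
  | zero =>
    rw [mSC_eq, show 2*0 = 0 from rfl, Ms_zero _ hc]
    have hπ : Real.pi ≠ 0 := Real.pi_ne_zero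
    have hw2 : w ≠ 0 := ne_of_gt hw
    field_simp
    norm_num [catalan_zero]
  | succ k ih =>
    have hrec := Ms_rec (2*w) hc k
    have h1 : mSC w (2*(k+1)) = (2*Real.pi*w^2)⁻¹ * Ms (2*w) (2*k+2) := by
      rw [mSC_eq]; norm_num [show 2*(k+1) = 2*k+2 by ring]
    have h2 : mSC w (2*k) = (2*Real.pi*w^2)⁻¹ * Ms (2*w) (2*k) := mSC_eq w (2*k)
    have hcat : ((k:ℝ) + 2) * catalan (k+1) = 2 * (2*k+1) * catalan k := by
      have := catalan_rec k
      exact_mod_cast congrArg (Nat.cast : ℕ → ℝ) this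
    have hne : (2*(k:ℝ)+4) ≠ 0 := by positivity
    have hπ : Real.pi ≠ 0 := Real.pi_ne_zero
    have hw2 : w ≠ 0 := ne_of_gt hw
    -- mSC w (2k+2) = K * Ms(2k+2) = K * (2k+1)(2w)^2/(2k+4) * Ms(2k) = (2k+1)*4w^2/(2k+4) * mSC w 2k
    have hM : Ms (2*w) (2*k+2) = (2*(k:ℝ)+1) * (2*w)^2 / (2*(k:ℝ)+4) * Ms (2*w) (2*k) := by
      rw [div_mul_eq_mul_div, eq_div_iff hne]
      linarith [hrec]
    have h3 : mSC w (2*(k+1)) = (2*(k:ℝ)+1) * (2*w)^2 / (2*(k:ℝ)+4) * mSC w (2*k) := by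
      rw [h1, h2, hM]; ring
    rw [h3, ih, show 2*(k+1) = 2*k+2 by ring, div_mul_eq_mul_div, div_eq_iff hne]
    linear_combination (-2*(w:ℝ)^(2*k+2)) * hcat

lemma rhoSC_nonneg (w : ℝ) (hw : 0 < w) (x : ℝ) : 0 ≤ rhoSC w x := by
  unfold rhoSC
  have : (0:ℝ) ≤ (2 * Real.pi * w ^ 2)⁻¹ := by positivity
  exact mul_nonneg this (Real.sqrt_nonneg _)

lemma mSC_bound (w : ℝ) (hw : 0 < w) (k : ℕ) : |mSC w k| ≤ (2*w)^k := by
  have hab : (-(2*w)) ≤ 2*w := by linarith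
  have hcont : Continuous fun x : ℝ => x ^ k * rhoSC w x := (continuous_pow k).mul (rhoSC_cont w)
  have h1 : |mSC w k| ≤ ∫ x in (-(2*w))..(2*w), |x ^ k * rhoSC w x| := by
    exact intervalIntegral.abs_integral_le_integral_abs (f := fun x => x ^ k * rhoSC w x)
      (a := -(2*w)) (b := 2*w) (μ := MeasureTheory.volume) hab
  have h2 : (∫ x in (-(2*w))..(2*w), |x ^ k * rhoSC w x|)
      ≤ ∫ x in (-(2*w))..(2*w), (2*w)^k * rhoSC w x := by
    apply intervalIntegral.integral_mono_on hab
    · exact (hcont.abs).intervalIntegrable _ _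
    · exact (continuous_const.mul (rhoSC_cont w)).intervalIntegrable _ _
    · intro x hx
      rw [abs_mul, abs_of_nonneg (rhoSC_nonneg w hw x), abs_pow]
      apply mul_le_mul_of_nonneg_right _ (rhoSC_nonneg w hw x)
      apply pow_le_pow_left₀ (abs_nonneg x)
      rw [abs_le]
      exact ⟨by linarith [hx.1], by linarith [hx.2]⟩
  have h3 : (∫ x in (-(2*w))..(2*w), (2*w)^k * rhoSC w x) = (2*w)^k := by
    rw [intervalIntegral.integral_const_mul]
    have hm0 : mSC w 0 = 1 := by
      have := mSC_even w hw 0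
      simpa using this
    have : (∫ x in (-(2*w))..(2*w), rhoSC w x) = mSC w 0 := by
      unfold mSC
      apply intervalIntegral.integral_congr
      intro x _
      simp
    rw [this, hm0, mul_one]
  calc |mSC w k| ≤ _ := h1
    _ ≤ _ := h2
    _ = _ := h3

-- helper: swap tsum and interval integral
lemma intervalIntegral_hasSum_le {ι : Type*} [Countable ι] {f : ι → ℝ → ℂ} {a b : ℝ} (hab : a ≤ b)
    (hint : ∀ i, IntervalIntegrable (f i) volume a b)
    (hsum : Summable fun i => ∫ x in a..b, ‖f i x‖) :
    HasSum (fun i => ∫ x in a..b, f i x) (∫ x in a..b, ∑' i, f i x) := by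
  rw [intervalIntegral.integral_of_le hab]
  have h1 : ∀ i, Integrable (f i) (volume.restrict (Set.Ioc a b)) := fun i => (hint i).1
  have h2 : Summable fun i => ∫ x in Set.Ioc a b, ‖f i x‖ := by
    convert hsum using 2 with i
    rw [intervalIntegral.integral_of_le hab]
  have := MeasureTheory.hasSum_integral_of_summable_integral_norm h1 h2
  convert this using 2 with i
  all_goals try rfl
  rw [intervalIntegral.integral_of_le hab]

lemma absmom_bound (w : ℝ) (hw : 0 < w) (k : ℕ) :
    (∫ x in (-(2*w))..(2*w), |x|^k * rhoSC w x) ≤ (2*w)^k := by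
  have hab : (-(2*w)) ≤ 2*w := by linarith
  have h2 : (∫ x in (-(2*w))..(2*w), |x|^k * rhoSC w x)
      ≤ ∫ x in (-(2*w))..(2*w), (2*w)^k * rhoSC w x := by
    apply intervalIntegral.integral_mono_on hab
    · exact ((continuous_abs.pow k).mul (rhoSC_cont w)).intervalIntegrable _ _
    · exact (continuous_const.mul (rhoSC_cont w)).intervalIntegrable _ _
    · intro x hx
      apply mul_le_mul_of_nonneg_right _ (rhoSC_nonneg w hw x)
      apply pow_le_pow_left₀ (abs_nonneg x)
      rw [abs_le]
      exact ⟨by linarith [hx.1], by linarith [hx.2]⟩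
  have h3 : (∫ x in (-(2*w))..(2*w), (2*w)^k * rhoSC w x) = (2*w)^k := by
    rw [intervalIntegral.integral_const_mul]
    have hm0 : mSC w 0 = 1 := by have := mSC_even w hw 0; simpa using this
    have : (∫ x in (-(2*w))..(2*w), rhoSC w x) = mSC w 0 := by
      unfold mSC
      apply intervalIntegral.integral_congr
      intro x _
      simp
    rw [this, hm0, mul_one]
  linarith

lemma exp_expansion (w : ℝ) (hw : 0 < w) (r : ℝ) (j : ℕ) :
    HasSum (fun n : ℕ => (Complex.I * r)^n / n.factorial * (mSC w (n+j) : ℂ))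
      (∫ x in (-(2*w))..(2*w), Complex.exp (Complex.I * r * x) * (x:ℂ)^j * (rhoSC w x : ℂ)) := by
  have hab : (-(2*w)) ≤ 2*w := by linarith
  set f : ℕ → ℝ → ℂ := fun n x => (Complex.I * r)^n / n.factorial * ((x:ℂ)^(n+j) * (rhoSC w x : ℂ))
    with hfd
  have hptw : ∀ x : ℝ, (∑' n, f n x) = Complex.exp (Complex.I * r * x) * (x:ℂ)^j * (rhoSC w x : ℂ) := by
    intro x
    have hexp : Complex.exp (Complex.I * r * x) = ∑' n : ℕ, (Complex.I * r * x)^n / n.factorial := by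
      rw [Complex.exp_eq_exp_ℂ, NormedSpace.exp_eq_tsum_div]
    rw [hexp, ← tsum_mul_right, ← tsum_mul_right]
    apply tsum_congr
    intro n
    simp only [hfd]
    rw [mul_pow, pow_add]
    ring
  have hint : ∀ n, IntervalIntegrable (f n) volume (-(2*w)) (2*w) := by
    intro n
    apply Continuous.intervalIntegrable
    exact continuous_const.mul ((Complex.continuous_ofReal.pow (n+j)).mul
      (Complex.continuous_ofReal.comp (rhoSC_cont w)))
  have hnorm : ∀ n, (∫ x in (-(2*w))..(2*w), ‖f n x‖) ≤ |r|^n / n.factorial * (2*w)^(n+j) := by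
    intro n
    have heq : ∀ x : ℝ, ‖f n x‖ = |r|^n / n.factorial * (|x|^(n+j) * rhoSC w x) := by
      intro x
      simp only [hfd]
      simp only [norm_mul, norm_div, norm_pow, Complex.norm_real, Real.norm_eq_abs,
        Complex.norm_I, Complex.norm_natCast, one_mul]
      rw [abs_of_nonneg (rhoSC_nonneg w hw x)]
    calc (∫ x in (-(2*w))..(2*w), ‖f n x‖)
        = |r|^n / n.factorial * ∫ x in (-(2*w))..(2*w), |x|^(n+j) * rhoSC w x := by
          rw [← intervalIntegral.integral_const_mul]
          exact intervalIntegral.integral_congr fun x _ => heq x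
      _ ≤ |r|^n / n.factorial * (2*w)^(n+j) := by
          apply mul_le_mul_of_nonneg_left (absmom_bound w hw (n+j)) (by positivity)
  have hsum : Summable fun n => ∫ x in (-(2*w))..(2*w), ‖f n x‖ := by
    apply Summable.of_nonneg_of_le
    · intro n
      apply intervalIntegral.integral_nonneg hab
      intro x _
      exact norm_nonneg _
    · exact hnorm
    · have : Summable fun n : ℕ => (2*w)^j * ((|r| * (2*w))^n / n.factorial) := by
        exact (Real.summable_pow_div_factorial (|r| * (2*w))).mul_left _
      apply this.congr
      intro n
      rw [mul_pow, pow_add]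
      ring
  have hswap := intervalIntegral_hasSum_le hab hint hsum
  have hval : ∀ n, (∫ x in (-(2*w))..(2*w), f n x)
      = (Complex.I * r)^n / n.factorial * (mSC w (n+j) : ℂ) := by
    intro n
    simp only [hfd]
    rw [intervalIntegral.integral_const_mul]
    congr 1
    have : ∀ x : ℝ, (x:ℂ)^(n+j) * (rhoSC w x : ℂ) = ((x^(n+j) * rhoSC w x : ℝ) : ℂ) := by
      intro x; push_cast; ring
    rw [intervalIntegral.integral_congr (fun x _ => this x)]
    rw [intervalIntegral.integral_ofReal]
    rfl
  have hintg : (∫ x in (-(2*w))..(2*w), ∑' n, f n x)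
      = ∫ x in (-(2*w))..(2*w), Complex.exp (Complex.I * r * x) * (x:ℂ)^j * (rhoSC w x : ℂ) :=
    intervalIntegral.integral_congr fun x _ => hptw x
  rw [← hintg]
  exact hswap.congr_fun fun n => (hval n).symm

lemma intervalIntegral_hasSum {ι : Type*} [Countable ι] {f : ι → ℝ → ℂ} {a b : ℝ}
    (hint : ∀ i, IntervalIntegrable (f i) volume a b)
    (hsum : Summable fun i => ∫ x in Set.uIoc a b, ‖f i x‖) :
    HasSum (fun i => ∫ x in a..b, f i x) (∫ x in a..b, ∑' i, f i x) := by
  rcases le_total a b with h|h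
  · rw [Set.uIoc_of_le h] at hsum
    simp_rw [intervalIntegral.integral_of_le h]
    exact MeasureTheory.hasSum_integral_of_summable_integral_norm (fun i => (hint i).1) hsum
  · rw [Set.uIoc_of_ge h] at hsum
    simp_rw [intervalIntegral.integral_of_ge h]
    exact (MeasureTheory.hasSum_integral_of_summable_integral_norm (fun i => (hint i).2) hsum).neg

lemma msum (w : ℝ) (hw : 0 < w) (N : ℕ) :
    (∑ p ∈ Finset.HasAntidiagonal.antidiagonal N, mSC w p.1 * mSC w p.2) = mSC w (N+2) / w^2 := by
  have hw2 : (w:ℝ)^2 ≠ 0 := by positivity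
  rw [Finset.Nat.sum_antidiagonal_eq_sum_range_succ_mk]
  rcases Nat.even_or_odd N with ⟨m, hm⟩ | ⟨m, hm⟩
  · -- N = 2m
    subst hm
    have hN : m + m = 2*m := by ring
    rw [hN]
    have hzero : ∀ i ∈ Finset.range (2*m+1), ¬ Even i → mSC w i * mSC w (2*m - i) = 0 := by
      intro i _ hodd
      rcases Nat.not_even_iff_odd.mp hodd with ⟨k, hk⟩
      subst hk
      rw [mSC_odd w k, zero_mul]
    have h1 : (∑ i ∈ Finset.range (2*m+1), mSC w i * mSC w (2*m - i))
        = ∑ i ∈ (Finset.range (2*m+1)).filter (fun i => Even i), mSC w i * mSC w (2*m - i) := by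
      rw [Finset.sum_filter_of_ne]
      intro i hi hne
      by_contra hodd
      exact hne (hzero i hi hodd)
    have h2 : (Finset.range (2*m+1)).filter (fun i => Even i)
        = (Finset.range (m+1)).image (fun j => 2*j) := by
      ext i
      simp only [Finset.mem_filter, Finset.mem_range, Finset.mem_image]
      simp only [Even]
      constructor
      · rintro ⟨hi, r, hr⟩; exact ⟨r, by omega, by omega⟩
      · rintro ⟨j, hj, rfl⟩; exact ⟨by omega, j, by omega⟩
    have h3 : (∑ i ∈ (Finset.range (m+1)).image (fun j => 2*j), mSC w i * mSC w (2*m - i))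
        = ∑ j ∈ Finset.range (m+1), mSC w (2*j) * mSC w (2*m - 2*j) := by
      apply Finset.sum_image
      intro a _ b _ h
      simp only at h
      omega
    rw [h1, h2, h3]
    have h4 : ∀ j ∈ Finset.range (m+1), mSC w (2*j) * mSC w (2*m - 2*j)
        = (catalan j * catalan (m - j) : ℕ) * w^(2*m) := by
      intro j hj
      rw [Finset.mem_range] at hj
      have hjm : j ≤ m := by omega
      rw [show 2*m - 2*j = 2*(m-j) by omega, mSC_even w hw, mSC_even w hw]
      push_cast
      rw [show 2*(m-j) = 2*m - 2*j by omega]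
      have hpow : w ^ (2*j) * w ^ (2*m - 2*j) = w ^ (2*m) := by
        rw [← pow_add]; congr 1; omega
      linear_combination ((catalan j : ℝ) * (catalan (m-j) : ℝ)) * hpow
    rw [Finset.sum_congr rfl h4]
    rw [← Finset.sum_mul]
    have h5 : (∑ j ∈ Finset.range (m+1), ((catalan j * catalan (m - j) : ℕ) : ℝ))
        = (catalan (m+1) : ℝ) := by
      rw [← Nat.cast_sum]
      congr 1
      rw [catalan_succ']
      rw [Finset.Nat.sum_antidiagonal_eq_sum_range_succ_mk]
    rw [h5, show 2*m+2 = 2*(m+1) by ring, mSC_even w hw (m+1)]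
    rw [show 2*(m+1) = 2*m + 2 by ring, pow_add]
    field_simp
  · -- N = 2m+1 : all terms vanish
    subst hm
    have hz : mSC w (2*m+1+2) = 0 := by
      rw [show 2*m+1+2 = 2*(m+1)+1 by ring, mSC_odd]
    rw [hz, zero_div]
    apply Finset.sum_eq_zero
    intro i hi
    rcases Nat.even_or_odd i with ⟨k, hk⟩ | ⟨k, hk⟩
    · -- i even, so 2m+1-i odd
      rw [Finset.mem_range] at hi
      have : 2*m+1 - i = 2*(m-k)+1 := by omega
      rw [this, mSC_odd, mul_zero]
    · rw [show i = 2*k+1 by omega, mSC_odd, zero_mul]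

/-- `(v∗v)(t) = −(i/w²) ∫_{−2w}^{2w} e^{iμt} μ ρ_sc(μ) dμ`, where
`(v∗v)(t) = ∫₀ᵗ v(t−s)v(s) ds`. -/
theorem semicircle_double_convolution (w : ℝ) (hw : 0 < w) (t : ℝ) :
    (∫ s in (0:ℝ)..t, vSC w (t - s) * vSC w s) =
      -(Complex.I / (w : ℂ) ^ 2) *
        ∫ x in (-(2 * w))..(2 * w), Complex.exp (Complex.I * x * t) * ((x : ℂ) * (rhoSC w x : ℂ)) := by
  have hw2 : ((w:ℂ))^2 ≠ 0 :=
    pow_ne_zero 2 (Complex.ofReal_ne_zero.mpr (ne_of_gt hw))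
  -- the v-expansion
  have hvHasSum : ∀ r : ℝ, HasSum (fun n : ℕ => (Complex.I * r)^n / n.factorial * (mSC w n : ℂ))
      (vSC w r) := by
    intro r
    have h := exp_expansion w hw r 0
    have heq : (∫ x in (-(2*w))..(2*w), Complex.exp (Complex.I * r * x) * (x:ℂ)^0 * (rhoSC w x : ℂ))
        = vSC w r := by
      unfold vSC
      apply intervalIntegral.integral_congr
      intro x _
      simp
    rw [heq] at h
    exact h.congr_fun fun n => by rw [Nat.add_zero]
  have hnormval : ∀ (r : ℝ) (n : ℕ), ‖(Complex.I * r)^n / (n.factorial : ℂ) * (mSC w n : ℂ)‖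
      = |r|^n / n.factorial * |mSC w n| := by
    intro r n
    rw [norm_mul, norm_div, norm_pow, norm_mul]
    simp only [Complex.norm_I, one_mul, Complex.norm_real, Real.norm_eq_abs,
      Complex.norm_natCast]
  have hnormv : ∀ r : ℝ, Summable fun n : ℕ => ‖(Complex.I * r)^n / (n.factorial : ℂ) * (mSC w n : ℂ)‖ := by
    intro r
    apply Summable.of_nonneg_of_le (fun n => norm_nonneg _)
      (f := fun n => (|r| * (2*w))^n / n.factorial)
    · intro n
      rw [hnormval r n, mul_pow]
      have h0 : (0:ℝ) ≤ |r|^n / n.factorial := by positivity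
      calc |r|^n / (n.factorial:ℝ) * |mSC w n| ≤ |r|^n / n.factorial * (2*w)^n :=
            mul_le_mul_of_nonneg_left (mSC_bound w hw n) h0
        _ = |r|^n * (2*w)^n / n.factorial := by ring
    · exact Real.summable_pow_div_factorial _
  -- the double series under the convolution integral
  set F : ℕ × ℕ → ℂ := fun p => Complex.I^(p.1+p.2) * (mSC w p.1 : ℂ) * (mSC w p.2 : ℂ)
      * (t:ℂ)^(p.1+p.2+1) / ((p.1+p.2+1).factorial : ℂ) with hFdef
  set g : ℕ × ℕ → ℝ → ℂ := fun p s =>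
      Complex.I^(p.1+p.2) * (mSC w p.1 : ℂ) * (mSC w p.2 : ℂ)
        / ((p.1.factorial : ℂ) * (p.2.factorial : ℂ))
      * (((t-s)^p.1 * s^p.2 : ℝ) : ℂ) with hgdef
  have hprod : ∀ s : ℝ, vSC w (t-s) * vSC w s = ∑' p : ℕ×ℕ, g p s := by
    intro s
    rw [← (hvHasSum (t-s)).tsum_eq, ← (hvHasSum s).tsum_eq,
      tsum_mul_tsum_of_summable_norm (hnormv (t-s)) (hnormv s)]
    apply tsum_congr
    intro p
    simp only [hgdef]
    rw [mul_pow, mul_pow]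
    push_cast
    ring
  have hgcont : ∀ p : ℕ×ℕ, Continuous (g p) := by
    intro p
    apply continuous_const.mul
    apply Complex.continuous_ofReal.comp
    exact (((continuous_const.sub continuous_id).pow _).mul (continuous_pow _))
  have hgint : ∀ p : ℕ×ℕ, IntervalIntegrable (g p) volume 0 t :=
    fun p => (hgcont p).intervalIntegrable _ _
  -- bound on uIoc
  have hst : ∀ s ∈ Set.uIoc (0:ℝ) t, |s| ≤ |t| ∧ |t - s| ≤ |t| := by
    intro s hs
    rcases le_total 0 t with h|h
    · rw [Set.uIoc_of_le h] at hs
      rw [abs_of_nonneg h]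
      constructor
      · rw [abs_le]; exact ⟨by linarith [hs.1, hs.2], hs.2⟩
      · rw [abs_le]; constructor <;> [linarith [hs.2]; linarith [hs.1]]
    · rw [Set.uIoc_of_ge h] at hs
      rw [abs_of_nonpos h]
      constructor
      · rw [abs_le]; exact ⟨by linarith [hs.1], by linarith [hs.2]⟩
      · rw [abs_le]; constructor <;> [linarith [hs.2]; linarith [hs.1]]
  have hgnorm : ∀ (p : ℕ×ℕ) (s : ℝ), s ∈ Set.uIoc (0:ℝ) t →
      ‖g p s‖ ≤ (2*w*|t|)^p.1 / p.1.factorial * ((2*w*|t|)^p.2 / p.2.factorial) := by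
    intro p s hs
    obtain ⟨hs1, hs2⟩ := hst s hs
    simp only [hgdef]
    rw [norm_mul, norm_div, norm_mul, norm_mul, norm_pow, norm_mul]
    simp only [Complex.norm_I, one_pow, one_mul, Complex.norm_real, Real.norm_eq_abs,
      Complex.norm_natCast]
    have hb1 : |mSC w p.1| ≤ (2*w)^p.1 := mSC_bound w hw p.1
    have hb2 : |mSC w p.2| ≤ (2*w)^p.2 := mSC_bound w hw p.2
    have hx : |(t-s)^p.1 * s^p.2| ≤ |t|^p.1 * |t|^p.2 := by
      rw [abs_mul, abs_pow, abs_pow]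
      exact mul_le_mul (pow_le_pow_left₀ (abs_nonneg _) hs2 _)
        (pow_le_pow_left₀ (abs_nonneg _) hs1 _) (by positivity) (by positivity)
    calc |mSC w p.1| * |mSC w p.2| / ((p.1.factorial : ℝ) * (p.2.factorial : ℝ))
          * |(t-s)^p.1 * s^p.2|
        ≤ (2*w)^p.1 * (2*w)^p.2 / ((p.1.factorial : ℝ) * (p.2.factorial : ℝ))
          * (|t|^p.1 * |t|^p.2) := by
          apply mul_le_mul _ hx (abs_nonneg _) (by positivity)
          apply div_le_div_of_nonneg_right ?_ (by positivity)
          · exact mul_le_mul hb1 hb2 (abs_nonneg _) (by positivity)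
      _ = (2*w*|t|)^p.1 / p.1.factorial * ((2*w*|t|)^p.2 / p.2.factorial) := by
          rw [mul_pow, mul_pow]
          ring
  have hgsum : Summable fun p : ℕ×ℕ => ∫ s in Set.uIoc (0:ℝ) t, ‖g p s‖ := by
    apply Summable.of_nonneg_of_le
      (f := fun p : ℕ×ℕ => |t| * ((2*w*|t|)^p.1 / p.1.factorial * ((2*w*|t|)^p.2 / p.2.factorial)))
    · intro p
      apply MeasureTheory.setIntegral_nonneg measurableSet_uIoc
      intro x _
      exact norm_nonneg _
    · intro p
      have hmono : (∫ s in Set.uIoc (0:ℝ) t, ‖g p s‖)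
          ≤ ∫ _ in Set.uIoc (0:ℝ) t,
            ((2*w*|t|)^p.1 / p.1.factorial * ((2*w*|t|)^p.2 / p.2.factorial)) := by
        apply MeasureTheory.setIntegral_mono_on
        · exact ((hgcont p).norm.integrableOn_Ioc (μ := MeasureTheory.volume) (a := min 0 t) (b := max 0 t) :)
        · exact MeasureTheory.integrableOn_const (by
            rw [Set.uIoc]
            exact measure_Ioc_lt_top.ne)
        · exact measurableSet_uIoc
        · exact hgnorm p
      have hconst : (∫ _ in Set.uIoc (0:ℝ) t,
            ((2*w*|t|)^p.1 / p.1.factorial * ((2*w*|t|)^p.2 / p.2.factorial)))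
          = (volume (Set.uIoc (0:ℝ) t)).toReal
            * ((2*w*|t|)^p.1 / p.1.factorial * ((2*w*|t|)^p.2 / p.2.factorial)) := by
        rw [MeasureTheory.setIntegral_const, smul_eq_mul, Measure.real]
      have hvol : (volume (Set.uIoc (0:ℝ) t)).toReal ≤ |t| := by
        rw [Set.uIoc, Real.volume_Ioc, ENNReal.toReal_ofReal_eq_iff.mpr ?_ ]
        · rcases le_total 0 t with h|h
          · rw [max_eq_right h, min_eq_left h, abs_of_nonneg h]; simp
          · rw [max_eq_left h, min_eq_right h, abs_of_nonpos h]; simp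
        · rcases le_total 0 t with h|h
          · rw [max_eq_right h, min_eq_left h]; linarith
          · rw [max_eq_left h, min_eq_right h]; linarith
      calc (∫ s in Set.uIoc (0:ℝ) t, ‖g p s‖) ≤ _ := hmono
        _ = _ := hconst
        _ ≤ |t| * ((2*w*|t|)^p.1 / p.1.factorial * ((2*w*|t|)^p.2 / p.2.factorial)) := by
            apply mul_le_mul_of_nonneg_right hvol (by positivity)
    · apply Summable.mul_left
      have hsb := Real.summable_pow_div_factorial (2*w*|t|)
      have hsummand : ∀ n : ℕ, ‖(2*w*|t|)^n / (n.factorial:ℝ)‖ = (2*w*|t|)^n / n.factorial :=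
        fun n => by rw [Real.norm_eq_abs, abs_of_nonneg (by positivity)]
      exact summable_mul_of_summable_norm
        (f := fun n : ℕ => (2*w*|t|)^n / n.factorial) (g := fun n : ℕ => (2*w*|t|)^n / n.factorial)
        (hsb.congr fun n => (hsummand n).symm) (hsb.congr fun n => (hsummand n).symm)
  have hswap := intervalIntegral_hasSum hgint hgsum
  have hval : ∀ p : ℕ×ℕ, (∫ s in (0:ℝ)..t, g p s) = F p := by
    intro p
    simp only [hgdef]
    rw [intervalIntegral.integral_const_mul, intervalIntegral.integral_ofReal,
      beta_nat p.1 p.2 t]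
    simp only [hFdef]
    have hfa : ((p.1.factorial : ℕ) : ℂ) ≠ 0 := Nat.cast_ne_zero.mpr (Nat.factorial_ne_zero p.1)
    have hfb : ((p.2.factorial : ℕ) : ℂ) ≠ 0 := Nat.cast_ne_zero.mpr (Nat.factorial_ne_zero p.2)
    have hfc : (((p.1+p.2+1).factorial : ℕ) : ℂ) ≠ 0 := Nat.cast_ne_zero.mpr (Nat.factorial_ne_zero _)
    push_cast
    field_simp
  have hFsum : HasSum F (∫ s in (0:ℝ)..t, vSC w (t - s) * vSC w s) := by
    have h1 : (∫ s in (0:ℝ)..t, ∑' p : ℕ×ℕ, g p s)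
        = ∫ s in (0:ℝ)..t, vSC w (t - s) * vSC w s :=
      intervalIntegral.integral_congr fun s _ => (hprod s).symm
    rw [← h1]
    exact hswap.congr_fun fun p => (hval p).symm
  -- regroup along antidiagonals
  have hsigma : HasSum (fun x : Σ n : ℕ, (Finset.HasAntidiagonal.antidiagonal n : Finset (ℕ×ℕ)) =>
      F (Finset.HasAntidiagonal.sigmaAntidiagonalEquivProd x)) (∫ s in (0:ℝ)..t, vSC w (t - s) * vSC w s) :=
    (Equiv.hasSum_iff Finset.HasAntidiagonal.sigmaAntidiagonalEquivProd).mpr hFsum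
  have hreg : HasSum (fun N : ℕ => ∑ p ∈ Finset.HasAntidiagonal.antidiagonal N, F p)
      (∫ s in (0:ℝ)..t, vSC w (t - s) * vSC w s) := by
    apply hsigma.sigma
    intro N
    have h := hasSum_fintype (fun c : (Finset.HasAntidiagonal.antidiagonal N : Finset (ℕ×ℕ)) => F c)
    rw [Finset.sum_coe_sort] at h
    exact h
  have hNval : ∀ N : ℕ, (∑ p ∈ Finset.HasAntidiagonal.antidiagonal N, F p)
      = Complex.I^N * (t:ℂ)^(N+1) / (((N+1).factorial : ℝ) : ℂ)
        * ((mSC w (N+2) : ℝ) : ℂ) / ((w:ℝ) : ℂ)^2 := by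
    intro N
    have h1 : ∀ p ∈ Finset.HasAntidiagonal.antidiagonal N, F p
        = Complex.I^N * (t:ℂ)^(N+1) / (((N+1).factorial : ℝ):ℂ)
          * ((mSC w p.1 * mSC w p.2 : ℝ) : ℂ) := by
      intro p hp
      have hpN : p.1 + p.2 = N := Finset.HasAntidiagonal.mem_antidiagonal.mp hp
      simp only [hFdef]
      rw [hpN]
      push_cast
      ring
    rw [Finset.sum_congr rfl h1, ← Finset.mul_sum, ← Complex.ofReal_sum, msum w hw N]
    push_cast
    ring
  have hregval : HasSum (fun N : ℕ => Complex.I^N * (t:ℂ)^(N+1) / (((N+1).factorial : ℝ) : ℂ)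
        * ((mSC w (N+2) : ℝ) : ℂ) / ((w:ℝ) : ℂ)^2)
      (∫ s in (0:ℝ)..t, vSC w (t - s) * vSC w s) :=
    hreg.congr_fun fun N => (hNval N).symm
  -- the right-hand side
  have hrhs0 := exp_expansion w hw t 1
  have heqR : (∫ x in (-(2*w))..(2*w), Complex.exp (Complex.I * t * x) * (x:ℂ)^1 * (rhoSC w x : ℂ))
      = ∫ x in (-(2 * w))..(2 * w), Complex.exp (Complex.I * x * t) * ((x : ℂ) * (rhoSC w x : ℂ)) := by
    apply intervalIntegral.integral_congr
    intro x _
    beta_reduce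
    rw [show Complex.I * (t:ℂ) * (x:ℂ) = Complex.I * (x:ℂ) * (t:ℂ) by ring, pow_one, mul_assoc]
  rw [heqR] at hrhs0
  set S := ∫ x in (-(2 * w))..(2 * w), Complex.exp (Complex.I * x * t) * ((x : ℂ) * (rhoSC w x : ℂ))
    with hSdef
  have h2 := hrhs0.mul_left (-(Complex.I / (w:ℂ)^2))
  set f : ℕ → ℂ := fun n => -(Complex.I / (w:ℂ)^2)
      * ((Complex.I * t)^n / n.factorial * (mSC w (n+1) : ℂ)) with hfdef
  have hf0 : f 0 = 0 := by
    have hm1 : mSC w 1 = 0 := by simpa using mSC_odd w 0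
    simp only [hfdef]
    rw [show (0:ℕ)+1 = 1 from rfl, hm1]
    simp
  have h3 : HasSum (fun n => f (n+1)) (-(Complex.I / (w:ℂ)^2) * S) := by
    apply (hasSum_nat_add_iff 1).mpr
    have : -(Complex.I / (w:ℂ)^2) * S + ∑ i ∈ Finset.range 1, f i = -(Complex.I / (w:ℂ)^2) * S := by
      rw [Finset.sum_range_one, hf0, add_zero]
    rw [this]
    exact h2
  have hterm : ∀ n : ℕ, f (n+1) = Complex.I^n * (t:ℂ)^(n+1) / (((n+1).factorial : ℝ) : ℂ)
        * ((mSC w (n+2) : ℝ) : ℂ) / ((w:ℝ) : ℂ)^2 := by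
    intro n
    simp only [hfdef]
    rw [show n+1+1 = n+2 from rfl, mul_pow, pow_succ]
    push_cast
    linear_combination (-(Complex.I^n * (t:ℂ)^(n+1) * ((mSC w (n+2) : ℝ):ℂ))
      / (((w:ℝ):ℂ)^2 * (((n+1).factorial : ℕ) : ℂ))) * Complex.I_sq
  exact hregval.unique (h3.congr_fun fun n => (hterm n).symm)
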